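/- Let $H_1, \dots, H_r$ be finite almost complete groups such that no pair $H_i, H_j$ ($i \neq j$) has a common nontrivial direct factor. Then the direct product $\prod_{i=1}^r H_i$ is almost complete. -/

import Mathlib

/-- The subgroup of inner automorphisms of a group `G`. -/
def Inn (G : Type*) [Group G] : Subgroup (MulAut G) :=
  (MulAut.conj : G →* MulAut G).range

instance Inn.normal (G : Type*) [Group G] : (Inn G).Normal := by
  constructor
  rintro x ⟨g, rfl⟩ φ
  refine ⟨φ g, ?_⟩
  ext h
  show MulAut.conj (φ g) h = (φ * MulAut.conj g * φ⁻¹) h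
  simp [MulAut.conj_apply, MulAut.mul_apply, map_mul, map_inv]

/-- A group `G` is *almost complete* if it is center-free and the natural surjection
`Aut(G) → Out(G) = Aut(G)/Inn(G)` admits a group-theoretic section. -/
def AlmostComplete (G : Type*) [Group G] : Prop :=
  Subgroup.center G = ⊥ ∧
    ∃ s : (MulAut G ⧸ Inn G) →* MulAut G,
      (QuotientGroup.mk' (Inn G)).comp s = MonoidHom.id (MulAut G ⧸ Inn G)

/-- `D` is a direct factor of `G` if `G ≅ D × B` for some group `B`. -/
def IsDirectFactor (D G : Type u) [Group D] [Group G] : Prop :=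
  ∃ (B : Type u) (_ : Group B), Nonempty (G ≃* D × B)

section Aux

universe v

variable {r : ℕ} {H : Fin r → Type v} [instG : ∀ i, Group (H i)]

/-- A `noncommProd` all of whose terms except possibly the `j`-th are trivial equals
its `j`-th term. -/
theorem noncommProd_eval_single {ι : Type*} [Fintype ι] [DecidableEq ι] {G : Type*} [Monoid G]
    (g : ι → G) (j : ι) (comm) (h : ∀ k, k ≠ j → g k = 1) :
    Finset.univ.noncommProd g comm = g j := by
  have h1 : Finset.univ.noncommProd g comm =
      (insert j ((Finset.univ : Finset ι).erase j)).noncommProd g (by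
        rw [Finset.insert_erase (Finset.mem_univ j)]
        exact comm) := by
    exact Finset.noncommProd_congr (Finset.insert_erase (Finset.mem_univ j)).symm
      (fun x _ => rfl) _
  rw [h1, Finset.noncommProd_insert_of_notMem _ _ _ _ (Finset.notMem_erase _ _),
    Finset.noncommProd_eq_pow_card _ _ _ 1
      (fun k hk => h k (Finset.ne_of_mem_erase hk)),
    one_pow, mul_one]

/-- In a product of centerless groups, an element commuting with everything is trivial. -/
theorem aux_center (hz : ∀ i, Subgroup.center (H i) = ⊥) (z : ∀ i, H i)
    (h : ∀ g, g * z = z * g) : z = 1 := by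
  funext k
  have hk : z k ∈ Subgroup.center (H k) := by
    rw [Subgroup.mem_center_iff]
    intro w
    have := congrFun (h (Pi.mulSingle k w)) k
    simpa using this
  rw [hz k] at hk
  simpa using hk

/-- **Key lemma.** Every automorphism of the product maps each coordinate subgroup
into itself. -/
theorem key_lemma (hz : ∀ i, Subgroup.center (H i) = ⊥)
    (hfac : ∀ i j, i ≠ j → ∀ (D : Type v) (_ : Group D), ¬ Subsingleton D →
      IsDirectFactor D (H i) → ¬ IsDirectFactor D (H j))
    (φ : MulAut (∀ i, H i)) (i j : Fin r) (hij : j ≠ i) (x : H i) :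
    φ (Pi.mulSingle i x) j = 1 := by
  by_contra hne
  -- the image of the i-th coordinate subgroup
  set M : Subgroup (∀ k, H k) := (φ.toMonoidHom.comp (MonoidHom.mulSingle H i)).range with hM
  -- the image of the complement (functions vanishing at i)
  set M' : Subgroup (∀ k, H k) :=
    Subgroup.map φ.toMonoidHom (Pi.evalMonoidHom H i).ker with hM'
  have memM : ∀ y : H i, φ (Pi.mulSingle i y) ∈ M := fun y => ⟨y, rfl⟩
  -- elements of M and M' commute
  have hcomm : ∀ m ∈ M, ∀ m' ∈ M', m * m' = m' * m := by
    rintro m ⟨y, rfl⟩ m' ⟨k, hk, rfl⟩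
    have hk1 : k i = 1 := hk
    show φ _ * φ _ = φ _ * φ _
    rw [← map_mul, ← map_mul]
    congr 1
    funext l
    rcases eq_or_ne l i with rfl | hl
    · simp [hk1]
    · simp [Pi.mulSingle_eq_of_ne hl]
  -- every element decomposes as a product of an element of M and one of M'
  have hdecomp : ∀ g : ∀ k, H k, ∃ m ∈ M, ∃ m' ∈ M', g = m * m' := by
    intro g
    set y := φ⁻¹ g with hy
    refine ⟨φ (Pi.mulSingle i (y i)), memM _,
      φ ((Pi.mulSingle i (y i))⁻¹ * y), ⟨(Pi.mulSingle i (y i))⁻¹ * y, ?_, rfl⟩, ?_⟩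
    · show ((Pi.mulSingle i (y i))⁻¹ * y) i = 1
      simp
    · rw [← map_mul]
      show g = φ (Pi.mulSingle i (y i) * ((Pi.mulSingle i (y i))⁻¹ * y))
      rw [mul_inv_cancel_left]
      show g = φ (φ⁻¹ g)
      simp
  -- everything commuting with M' lies in M
  have hmemM : ∀ c : ∀ k, H k, (∀ m' ∈ M', c * m' = m' * c) → c ∈ M := by
    intro c hc
    obtain ⟨m, hm, m', hm', rfl⟩ := hdecomp c
    have hm'1 : m' = 1 := by
      apply aux_center hz
      intro g
      obtain ⟨a, ha, b, hb, rfl⟩ := hdecomp g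
      -- m' commutes with b
      have h1 : m' * b = b * m' := by
        have hcb := hc b hb
        have hmb := hcomm m hm b hb
        have : m * (m' * b) = m * (b * m') := by
          calc m * (m' * b) = m * m' * b := by rw [mul_assoc]
            _ = b * (m * m') := hcb
            _ = b * m * m' := by rw [mul_assoc]
            _ = m * b * m' := by rw [hmb]
            _ = m * (b * m') := by rw [mul_assoc]
        exact mul_left_cancel this
      have h2 : a * m' = m' * a := hcomm a ha m' hm'
      calc a * b * m' = a * (b * m') := by rw [mul_assoc]
        _ = a * (m' * b) := by rw [h1]
        _ = a * m' * b := by rw [mul_assoc]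
        _ = m' * a * b := by rw [h2]
        _ = m' * (a * b) := by rw [mul_assoc]
    rw [hm'1, mul_one]
    exact hm
  -- the coordinates of elements of M stay in M
  have hsingle : ∀ m ∈ M, ∀ k, Pi.mulSingle k (m k) ∈ M := by
    intro m hm k
    apply hmemM
    intro m' hm'
    have h0 := congrFun (hcomm m hm m' hm') k
    funext l
    rcases eq_or_ne l k with rfl | hl
    · simpa using h0
    · simp [Pi.mulSingle_eq_of_ne hl]
  -- the common direct factor
  set D : Subgroup (H j) := Subgroup.map (Pi.evalMonoidHom H j) M with hD
  set D' : Subgroup (H j) := Subgroup.map (Pi.evalMonoidHom H j) M' with hD'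
  have hDD' : ∀ d ∈ D, ∀ e ∈ D', d * e = e * d := by
    rintro d ⟨m, hm, rfl⟩ e ⟨m', hm', rfl⟩
    have := congrFun (hcomm m hm m' hm') j
    simpa using this
  have hdecompj : ∀ w : H j, ∃ d ∈ D, ∃ e ∈ D', w = d * e := by
    intro w
    obtain ⟨m, hm, m', hm', h⟩ := hdecomp (Pi.mulSingle j w)
    refine ⟨m j, ⟨m, hm, rfl⟩, m' j, ⟨m', hm', rfl⟩, ?_⟩
    have := congrFun h j
    simpa using this
  have hDbot : ∀ d ∈ D, d ∈ D' → d = 1 := by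
    intro d hd hd'
    have hc : d ∈ Subgroup.center (H j) := by
      rw [Subgroup.mem_center_iff]
      intro w
      obtain ⟨d₀, hd₀, e₀, he₀, rfl⟩ := hdecompj w
      calc d₀ * e₀ * d = d₀ * (e₀ * d) := by rw [mul_assoc]
        _ = d₀ * (d * e₀) := by rw [hDD' d hd e₀ he₀]
        _ = d₀ * d * e₀ := by rw [mul_assoc]
        _ = d * d₀ * e₀ := by rw [hDD' d₀ hd₀ d hd']
        _ = d * (d₀ * e₀) := by rw [mul_assoc]
    rw [hz j] at hc
    simpa using hc
  -- `D` is a direct factor of `H j`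
  have factorj : IsDirectFactor (↥D) (H j) := by
    refine ⟨↥D', inferInstance, ?_⟩
    let f : ↥D × ↥D' →* H j := MonoidHom.mk' (fun p => (p.1 : H j) * (p.2 : H j)) (by
      rintro ⟨d₁, e₁⟩ ⟨d₂, e₂⟩
      show (d₁ * d₂ : H j) * (e₁ * e₂ : H j) = _
      have h := hDD' d₂ d₂.2 e₁ e₁.2
      calc (d₁ * d₂ : H j) * (e₁ * e₂) = d₁ * (d₂ * e₁) * e₂ := by group
        _ = d₁ * (e₁ * d₂) * e₂ := by rw [h]
        _ = (d₁ : H j) * e₁ * (d₂ * e₂) := by group)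
    have hbij : Function.Bijective f := by
      constructor
      · rw [injective_iff_map_eq_one]
        rintro ⟨d, e⟩ hp
        have hp' : (d : H j) * e = 1 := hp
        have hd' : (d : H j) ∈ D' := by
          have hde : (d : H j) = (e : H j)⁻¹ := eq_inv_of_mul_eq_one_left hp'
          rw [hde]
          exact inv_mem e.2
        have hd1 : (d : H j) = 1 := hDbot d d.2 hd'
        have he1 : (e : H j) = 1 := by
          have := hp'
          rw [hd1, one_mul] at this
          exact this
        exact Prod.ext (Subtype.ext hd1) (Subtype.ext he1)
      · intro w
        obtain ⟨d, hd, e, he, rfl⟩ := hdecompj w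
        exact ⟨(⟨d, hd⟩, ⟨e, he⟩), rfl⟩
    exact ⟨(MulEquiv.ofBijective f hbij).symm⟩
  -- `D` is a direct factor of `H i`
  set B : Subgroup (∀ k, H k) := M ⊓ (Pi.evalMonoidHom H j).ker with hB
  have factori : IsDirectFactor (↥D) (H i) := by
    refine ⟨↥B, inferInstance, ?_⟩
    -- H i ≃* M
    let h1 : H i →* ↥M := MonoidHom.mk' (fun y => ⟨φ (Pi.mulSingle i y), memM y⟩) (by
      intro y z
      apply Subtype.ext
      show φ (Pi.mulSingle i (y * z)) = φ (Pi.mulSingle i y) * φ (Pi.mulSingle i z)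
      rw [← map_mul]
      congr 1
      exact (MonoidHom.mulSingle H i).map_mul y z)
    have h1bij : Function.Bijective h1 := by
      constructor
      · rw [injective_iff_map_eq_one]
        intro y hy
        have : φ (Pi.mulSingle i y) = 1 := Subtype.ext_iff.mp hy
        have h2 : Pi.mulSingle i y = 1 := by
          apply φ.injective
          simpa using this
        have := congrFun h2 i
        simpa using this
      · rintro ⟨g, hg⟩
        obtain ⟨y, hy⟩ := hg
        exact ⟨y, Subtype.ext hy⟩
    -- ↥D × ↥B ≃* M
    let g1 : ↥D × ↥B →* ↥M := MonoidHom.mk' (fun p =>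
      ⟨Pi.mulSingle j (p.1 : H j) * (p.2 : ∀ k, H k), by
        refine mul_mem ?_ p.2.2.1
        obtain ⟨m, hm, hmj⟩ := p.1.2
        have : (m j : H j) = (p.1 : H j) := hmj
        rw [← this]
        exact hsingle m hm j⟩) (by
      rintro ⟨d₁, b₁⟩ ⟨d₂, b₂⟩
      apply Subtype.ext
      show Pi.mulSingle j ((d₁ : H j) * d₂) * ((b₁ : ∀ k, H k) * b₂)
        = (Pi.mulSingle j (d₁ : H j) * (b₁ : ∀ k, H k)) *
          (Pi.mulSingle j (d₂ : H j) * (b₂ : ∀ k, H k))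
      have hb₁ : (b₁ : ∀ k, H k) j = 1 := b₁.2.2
      have hb₂ : (b₂ : ∀ k, H k) j = 1 := b₂.2.2
      funext l
      rcases eq_or_ne l j with rfl | hl
      · simp [hb₁, hb₂]
      · simp [Pi.mulSingle_eq_of_ne hl])
    have g1bij : Function.Bijective g1 := by
      constructor
      · rw [injective_iff_map_eq_one]
        rintro ⟨d, b⟩ hp
        have hp' : Pi.mulSingle j (d : H j) * (b : ∀ k, H k) = 1 := Subtype.ext_iff.mp hp
        have hb : (b : ∀ k, H k) j = 1 := b.2.2
        have hd1 : (d : H j) = 1 := by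
          have := congrFun hp' j
          simpa [hb] using this
        have hb1 : (b : ∀ k, H k) = 1 := by
          have : Pi.mulSingle j (d : H j) = 1 := by rw [hd1]; simp
          rw [this, one_mul] at hp'
          exact hp'
        exact Prod.ext (Subtype.ext hd1) (Subtype.ext hb1)
      · rintro ⟨m, hm⟩
        have hmem1 : (Pi.mulSingle j (m j))⁻¹ * m ∈ M := by
          have h4 : Pi.mulSingle j (m j) ∈ M := hsingle m hm j
          exact mul_mem (inv_mem h4) hm
        have hmem2 : (Pi.mulSingle j (m j))⁻¹ * m ∈ (Pi.evalMonoidHom H j).ker := by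
          show ((Pi.mulSingle j (m j))⁻¹ * m) j = 1
          simp
        refine ⟨(⟨m j, ⟨m, hm, rfl⟩⟩, ⟨(Pi.mulSingle j (m j))⁻¹ * m, hmem1, hmem2⟩), ?_⟩
        apply Subtype.ext
        show Pi.mulSingle j (m j) * ((Pi.mulSingle j (m j))⁻¹ * m) = m
        rw [mul_inv_cancel_left]
    exact ⟨(MulEquiv.ofBijective h1 h1bij).trans (MulEquiv.ofBijective g1 g1bij).symm⟩
  -- D is nontrivial
  have hone : φ (Pi.mulSingle i x) j ∈ D := ⟨φ (Pi.mulSingle i x), memM x, rfl⟩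
  have hnontriv : ¬ Subsingleton ↥D := by
    intro hs
    exact hne (Subtype.ext_iff.mp (@Subsingleton.elim _ hs ⟨φ (Pi.mulSingle i x) j, hone⟩ 1))
  exact hfac i j hij.symm ↥D inferInstance hnontriv factori factorj

/-- The component of an automorphism of the product at coordinate `i`. -/
def componentAut
    (hkey : ∀ (ψ : MulAut (∀ i, H i)) (i j : Fin r) (_ : j ≠ i) (x : H i),
      ψ (Pi.mulSingle i x) j = 1)
    (φ : MulAut (∀ i, H i)) (i : Fin r) : MulAut (H i) where
  toFun x := φ (Pi.mulSingle i x) i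
  invFun y := φ⁻¹ (Pi.mulSingle i y) i
  left_inv x := by
    show φ⁻¹ (Pi.mulSingle i (φ (Pi.mulSingle i x) i)) i = x
    have h1 : Pi.mulSingle i (φ (Pi.mulSingle i x) i) = φ (Pi.mulSingle i x) := by
      funext l
      rcases eq_or_ne l i with rfl | hl
      · simp
      · rw [Pi.mulSingle_eq_of_ne hl, hkey φ i l hl]
    rw [h1]
    show φ.symm (φ (Pi.mulSingle i x)) i = x
    simp
  right_inv y := by
    show φ (Pi.mulSingle i (φ⁻¹ (Pi.mulSingle i y) i)) i = y
    have h1 : Pi.mulSingle i (φ⁻¹ (Pi.mulSingle i y) i) = φ⁻¹ (Pi.mulSingle i y) := by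
      funext l
      rcases eq_or_ne l i with rfl | hl
      · simp
      · rw [Pi.mulSingle_eq_of_ne hl, hkey φ⁻¹ i l hl]
    rw [h1]
    show φ (φ.symm (Pi.mulSingle i y)) i = y
    simp
  map_mul' x y := by
    show φ (Pi.mulSingle i (x * y)) i = φ (Pi.mulSingle i x) i * φ (Pi.mulSingle i y) i
    have h : Pi.mulSingle i (x * y) = Pi.mulSingle i x * Pi.mulSingle i y :=
      (MonoidHom.mulSingle H i).map_mul x y
    rw [h, map_mul]
    rfl

theorem componentAut_spec
    (hkey : ∀ (ψ : MulAut (∀ i, H i)) (i j : Fin r) (_ : j ≠ i) (x : H i),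
      ψ (Pi.mulSingle i x) j = 1)
    (φ : MulAut (∀ i, H i)) (f : ∀ i, H i) (j : Fin r) :
    φ f j = componentAut hkey φ j (f j) := by
  have h0 : φ f j = (Pi.evalMonoidHom H j) (φ.toMonoidHom
      (Finset.univ.noncommProd (fun k => Pi.mulSingle k (f k))
        fun k _ l _ _ => Pi.mulSingle_apply_commute f k l)) := by
    rw [Finset.noncommProd_mulSingle]
    rfl
  erw [h0, Finset.map_noncommProd, Finset.map_noncommProd]
  exact noncommProd_eval_single _ j _ (fun k hk => hkey φ k j (Ne.symm hk) (f k))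

theorem componentAut_mul
    (hkey : ∀ (ψ : MulAut (∀ i, H i)) (i j : Fin r) (_ : j ≠ i) (x : H i),
      ψ (Pi.mulSingle i x) j = 1)
    (φ ψ : MulAut (∀ i, H i)) (i : Fin r) :
    componentAut hkey (φ * ψ) i = componentAut hkey φ i * componentAut hkey ψ i := by
  apply MulEquiv.ext
  intro x
  show (φ * ψ) (Pi.mulSingle i x) i = componentAut hkey φ i (componentAut hkey ψ i x)
  have h1 : (φ * ψ) (Pi.mulSingle i x) = φ (ψ (Pi.mulSingle i x)) := rfl
  rw [h1, componentAut_spec hkey φ (ψ (Pi.mulSingle i x)) i]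
  rfl

theorem componentAut_one
    (hkey : ∀ (ψ : MulAut (∀ i, H i)) (i j : Fin r) (_ : j ≠ i) (x : H i),
      ψ (Pi.mulSingle i x) j = 1)
    (i : Fin r) : componentAut hkey 1 i = 1 := by
  apply MulEquiv.ext
  intro x
  show (1 : MulAut (∀ i, H i)) (Pi.mulSingle i x) i = x
  simp

theorem componentAut_conj
    (hkey : ∀ (ψ : MulAut (∀ i, H i)) (i j : Fin r) (_ : j ≠ i) (x : H i),
      ψ (Pi.mulSingle i x) j = 1)
    (g : ∀ i, H i) (i : Fin r) :
    componentAut hkey (MulAut.conj g) i = MulAut.conj (g i) := by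
  apply MulEquiv.ext
  intro x
  show MulAut.conj g (Pi.mulSingle i x) i = g i * x * (g i)⁻¹
  show (g * Pi.mulSingle i x * g⁻¹) i = g i * x * (g i)⁻¹
  simp

end Aux

/-- Let `H₁, …, Hᵣ` be finite almost complete groups such that no pair
`Hᵢ, Hⱼ` (`i ≠ j`) has a common nontrivial direct factor. Then `∏ᵢ Hᵢ` is almost complete. -/
theorem statement4 (r : ℕ) (H : Fin r → Type u) (instG : ∀ i, Group (H i))
    (instF : ∀ i, Finite (H i)) (hac : ∀ i, AlmostComplete (H i))
    (hfac : ∀ i j, i ≠ j → ∀ (D : Type u) (_ : Group D), ¬ Subsingleton D →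
      IsDirectFactor D (H i) → ¬ IsDirectFactor D (H j)) :
    AlmostComplete (∀ i, H i) := by
  have hz : ∀ i, Subgroup.center (H i) = ⊥ := fun i => (hac i).1
  have hkey : ∀ (ψ : MulAut (∀ i, H i)) (i j : Fin r) (_ : j ≠ i) (x : H i),
      ψ (Pi.mulSingle i x) j = 1 := fun ψ i j hji x => key_lemma hz hfac ψ i j hji x
  constructor
  · -- center is trivial
    rw [eq_bot_iff]
    intro z hzc
    rw [Subgroup.mem_center_iff] at hzc
    rw [Subgroup.mem_bot]
    exact aux_center hz z hzc
  · -- the section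
    choose s hs using fun i => (hac i).2
    -- the endomorphism of Aut(∏ H) given by applying the sections componentwise
    let Ψ : MulAut (∀ i, H i) →* MulAut (∀ i, H i) := {
      toFun := fun φ => MulEquiv.piCongrRight
        (fun i => s i (QuotientGroup.mk' (Inn (H i)) (componentAut hkey φ i)))
      map_one' := by
        apply MulEquiv.ext
        intro f
        funext l
        show s l (QuotientGroup.mk' (Inn (H l)) (componentAut hkey 1 l)) (f l) = f l
        rw [componentAut_one hkey l, map_one, map_one]
        rfl
      map_mul' := by
        intro φ ψ
        apply MulEquiv.ext
        intro f
        funext l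
        show s l (QuotientGroup.mk' (Inn (H l)) (componentAut hkey (φ * ψ) l)) (f l) = _
        rw [componentAut_mul hkey φ ψ l, map_mul, map_mul]
        rfl }
    have hΨconj : ∀ φ ∈ Inn (∀ i, H i), Ψ φ = 1 := by
      rintro φ ⟨g, rfl⟩
      apply MulEquiv.ext
      intro f
      funext l
      show s l (QuotientGroup.mk' (Inn (H l)) (componentAut hkey (MulAut.conj g) l)) (f l) = f l
      rw [componentAut_conj hkey g l]
      have h1 : QuotientGroup.mk' (Inn (H l)) (MulAut.conj (g l)) = 1 := by
        rw [QuotientGroup.mk'_apply, QuotientGroup.eq_one_iff]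
        exact ⟨g l, rfl⟩
      rw [h1, map_one]
      rfl
    refine ⟨QuotientGroup.lift (Inn (∀ i, H i)) Ψ hΨconj, ?_⟩
    apply MonoidHom.ext
    intro q
    induction q using QuotientGroup.induction_on with
    | H φ =>
      show QuotientGroup.mk' (Inn (∀ i, H i))
        (QuotientGroup.lift (Inn (∀ i, H i)) Ψ hΨconj (QuotientGroup.mk φ)) = _
      rw [show QuotientGroup.lift (Inn (∀ i, H i)) Ψ hΨconj (QuotientGroup.mk φ) = Ψ φ from rfl]
      -- find the inner correction for each coordinate
      have hsec : ∀ (i : Fin r) (a : MulAut (H i)),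
          ∃ z ∈ Inn (H i), a * z = s i (QuotientGroup.mk' (Inn (H i)) a) := by
        intro i a
        have h5 := congrArg (fun h : (MulAut (H i) ⧸ Inn (H i)) →* (MulAut (H i) ⧸ Inn (H i)) =>
          h (QuotientGroup.mk' (Inn (H i)) a)) (hs i)
        have h6 : QuotientGroup.mk' (Inn (H i)) (s i (QuotientGroup.mk' (Inn (H i)) a))
            = QuotientGroup.mk' (Inn (H i)) a := h5
        exact (QuotientGroup.mk'_eq_mk' (N := Inn (H i))).mp h6.symm
      choose z hzmem hzeq using fun i => hsec i (componentAut hkey φ i)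
      choose g hg using fun i => hzmem i
      have hΨφ : Ψ φ = φ * MulAut.conj (fun i => g i) := by
        apply MulEquiv.ext
        intro f
        funext l
        show s l (QuotientGroup.mk' (Inn (H l)) (componentAut hkey φ l)) (f l) = _
        rw [← hzeq l]
        have hr : (φ * MulAut.conj (fun i => g i)) f l
            = componentAut hkey φ l ((MulAut.conj (fun i => g i)) f l) := by
          have : (φ * MulAut.conj (fun i => g i)) f = φ ((MulAut.conj (fun i => g i)) f) := rfl
          rw [this, componentAut_spec hkey φ _ l]
        rw [hr]
        show componentAut hkey φ l (z l (f l)) = _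
        have hzl : z l (f l) = (MulAut.conj (fun i => g i)) f l := by
          rw [← hg l]
          show MulAut.conj (g l) (f l) = ((fun i => g i) * f * (fun i => g i)⁻¹) l
          simp [MulAut.conj_apply]
        rw [hzl]
      rw [hΨφ, map_mul]
      have hconj1 : QuotientGroup.mk' (Inn (∀ i, H i)) (MulAut.conj (fun i => g i)) = 1 := by
        rw [QuotientGroup.mk'_apply, QuotientGroup.eq_one_iff]
        exact ⟨fun i => g i, rfl⟩
      rw [hconj1, mul_one]
      rfl
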